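/- If k₁,…,kₙ are natural numbers with each kᵢ ∈ {1,2} and n ≥ 1, then k₁+⋯+kₙ ≤ Σ over all tuples (j₁,…,jₙ) with jᵢ ∈ {1,…,kᵢ} of the multinomial coefficient (m₁+⋯+mₙ)!/(m₁!⋯mₙ!), where each mᵢ ≥ 1 is any fixed positive trace length assigned to the jᵢ-th trace of child i. -/
import Mathlib

lemma le_choose_aux : ∀ (S k : ℕ), 1 ≤ k → k < S → S ≤ S.choose k := by
  intro S
  induction S with
  | zero => intro k h1 h2; omega
  | succ S ih =>
    intro k h1 h2
    match k, h1 with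
    | 1, _ => simp
    | (k'+2), _ =>
      rw [Nat.choose_succ_succ']
      have h1' : S ≤ S.choose (k'+1) := ih (k'+1) (by omega) (by omega)
      have h2' : 0 < S.choose (k'+1+1) := Nat.choose_pos (by omega)
      omega

lemma n_le_multinomial {n : ℕ} (f : Fin n → ℕ) (hf : ∀ i, 1 ≤ f i) :
    n ≤ Nat.multinomial Finset.univ f := by
  rcases Nat.lt_or_ge n 2 with h | h
  · have := Nat.multinomial_pos (s := (Finset.univ : Finset (Fin n))) (f := f)
    omega
  · set i0 : Fin n := ⟨0, by omega⟩ with hi0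
    have h0 : i0 ∉ Finset.univ.erase i0 := Finset.notMem_erase _ _
    have hins : (Finset.univ : Finset (Fin n)) = insert i0 (Finset.univ.erase i0) := by
      rw [Finset.insert_erase (Finset.mem_univ _)]
    rw [hins, Nat.multinomial_insert h0]
    have hrest : n - 1 ≤ ∑ i ∈ Finset.univ.erase i0, f i := by
      calc n - 1 = (Finset.univ.erase i0).card := by
            rw [Finset.card_erase_of_mem (Finset.mem_univ _), Finset.card_univ,
              Fintype.card_fin]
        _ = ∑ i ∈ Finset.univ.erase i0, 1 := by simp
        _ ≤ _ := Finset.sum_le_sum fun i _ => hf i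
    have hchoose : f i0 + ∑ i ∈ Finset.univ.erase i0, f i ≤
        (f i0 + ∑ i ∈ Finset.univ.erase i0, f i).choose (f i0) :=
      le_choose_aux _ _ (hf i0) (by have := hf i0; omega)
    have hpos := Nat.multinomial_pos (s := Finset.univ.erase i0) (f := f)
    have h2 : n ≤ f i0 + ∑ i ∈ Finset.univ.erase i0, f i := by
      have := hf i0; omega
    calc n ≤ (f i0 + ∑ i ∈ Finset.univ.erase i0, f i).choose (f i0) :=
          le_trans h2 hchoose
      _ = (f i0 + ∑ i ∈ Finset.univ.erase i0, f i).choose (f i0) * 1 := by ring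
      _ ≤ _ := Nat.mul_le_mul_left _ hpos

/-- If `k₁,…,kₙ ∈ {1,2}` and `n ≥ 1`, then `k₁+⋯+kₙ` is at most the sum, over all
tuples `(j₁,…,jₙ)` with `jᵢ ∈ {1,…,kᵢ}`, of the multinomial coefficients of the
corresponding positive trace lengths `mᵢ(jᵢ) ≥ 1`. -/
theorem stmt_4 {n : ℕ} (hn : 1 ≤ n) (k : Fin n → ℕ)
    (hk : ∀ i, k i = 1 ∨ k i = 2)
    (m : (i : Fin n) → Fin (k i) → ℕ) (hm : ∀ i j, 1 ≤ m i j) :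
    ∑ i, k i ≤
      ∑ j : (i : Fin n) → Fin (k i),
        Nat.multinomial Finset.univ (fun i => m i (j i)) := by
  have hk1 : ∀ i, 1 ≤ k i := fun i => by rcases hk i with h | h <;> omega
  have step1 : ∑ i, k i ≤ (∏ i, k i) * n := by
    calc ∑ i, k i ≤ ∑ _i : Fin n, ∏ i, k i :=
          Finset.sum_le_sum fun i _ =>
            Finset.single_le_prod' (fun j _ => hk1 j) (Finset.mem_univ i)
      _ = n * ∏ i, k i := by rw [Finset.sum_const, Finset.card_univ, Fintype.card_fin,
            smul_eq_mul]
      _ = (∏ i, k i) * n := Nat.mul_comm _ _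
  have step2 : (∏ i, k i) * n ≤
      ∑ j : (i : Fin n) → Fin (k i),
        Nat.multinomial Finset.univ (fun i => m i (j i)) := by
    have hcard : (Finset.univ : Finset ((i : Fin n) → Fin (k i))).card = ∏ i, k i := by
      simp [Fintype.card_pi]
    calc (∏ i, k i) * n
        = (Finset.univ : Finset ((i : Fin n) → Fin (k i))).card • n := by
          rw [hcard, smul_eq_mul]
      _ ≤ _ := Finset.card_nsmul_le_sum _ _ _ fun j _ =>
          n_le_multinomial _ (fun i => hm i (j i))
  exact le_trans step1 step2
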